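/- Define φ(x) = exp(−(1/2)B·x² − C·x) and λ = −(1/2)α₂C² + α₃C + (1/2)σ²B, where σ² := σ₁² + σ₂². Then for every x ∈ ℝ: (1/2)σ²·φ''(x) + (α₃ − α₁x)·φ'(x) − (1/2)q(1−q)(μ²x²/ς²)·φ(x) + (qσ₂²/(2(1−q)))·φ'(x)²/φ(x) = −λ·φ(x). -/

import Mathlib

/-- Kim–Omberg model: `(λ, φ)` with `φ(x) = exp(-(1/2)Bx² - Cx)` and
`λ = -(1/2)α₂C² + α₃C + (1/2)σ²B` solves the ergodic HJB equation
`(1/2)σ²φ'' + (α₃-α₁x)φ' - (1/2)q(1-q)(μ²x²/ς²)φ + (qσ₂²/(2(1-q)))φ'²/φ = -λφ`. -/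
theorem stmt7 (k m μ ς σ ρ q : ℝ)
    (hk : 0 < k) (hμ : μ ≠ 0) (hς : 0 < ς) (hσ : 0 < σ)
    (hρ : ρ ∈ Set.Ioo (-1 : ℝ) 1) (hq : q ∈ Set.Ioo (0 : ℝ) 1)
    (σ₁ σ₂ α₁ α₂ α₃ α₄ B C lam : ℝ)
    (hσ₁ : σ₁ = ρ * σ) (hσ₂ : σ₂ = Real.sqrt (1 - ρ ^ 2) * σ)
    (hα₁ : α₁ = k + q * μ * σ₁ / ς) (hα₂ : α₂ = σ₁ ^ 2 + σ₂ ^ 2 / (1 - q))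
    (hα₃ : α₃ = k * m)
    (hα₄ : α₄ = Real.sqrt (α₁ ^ 2 + q * (1 - q) * α₂ * μ ^ 2 / ς ^ 2))
    (hB : B = (α₄ - α₁) / α₂) (hC : C = α₃ * (α₄ - α₁) / (α₂ * α₄))
    (hlam : lam = -(1 / 2) * α₂ * C ^ 2 + α₃ * C + (1 / 2) * (σ₁ ^ 2 + σ₂ ^ 2) * B)
    (φ : ℝ → ℝ) (hφ : ∀ x, φ x = Real.exp (-(1 / 2) * B * x ^ 2 - C * x)) :
    ∀ x, (1 / 2) * (σ₁ ^ 2 + σ₂ ^ 2) * deriv (deriv φ) x + (α₃ - α₁ * x) * deriv φ x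
        - (1 / 2) * q * (1 - q) * (μ ^ 2 * x ^ 2 / ς ^ 2) * φ x
        + (q * σ₂ ^ 2 / (2 * (1 - q))) * (deriv φ x) ^ 2 / φ x
      = -lam * φ x := by
  obtain ⟨hq0, hq1⟩ := hq
  have h1q : (0:ℝ) < 1 - q := by linarith
  have hρ2 : (0:ℝ) < 1 - ρ ^ 2 := by nlinarith [hρ.1, hρ.2]
  have hσ₂pos : 0 < σ₂ := by
    rw [hσ₂]; exact mul_pos (Real.sqrt_pos.mpr hρ2) hσ
  have hα₂pos : 0 < α₂ := by
    rw [hα₂]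
    have : 0 < σ₂ ^ 2 / (1 - q) := div_pos (pow_pos hσ₂pos 2) h1q
    nlinarith [sq_nonneg σ₁]
  have hinner : 0 < α₁ ^ 2 + q * (1 - q) * α₂ * μ ^ 2 / ς ^ 2 := by
    have h2 : 0 < q * (1 - q) * α₂ * μ ^ 2 / ς ^ 2 := by
      apply div_pos
      · positivity
      · positivity
    nlinarith [sq_nonneg α₁]
  have hα₄pos : 0 < α₄ := by rw [hα₄]; exact Real.sqrt_pos.mpr hinner
  have hα₄sq : α₄ ^ 2 = α₁ ^ 2 + q * (1 - q) * α₂ * μ ^ 2 / ς ^ 2 := by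
    rw [hα₄, Real.sq_sqrt hinner.le]
  have hB' : α₂ * B = α₄ - α₁ := by
    rw [hB]; field_simp
  have hC' : α₄ * C = α₃ * B := by
    rw [hC, hB]; field_simp
  have h1 : α₂ * B ^ 2 + 2 * α₁ * B - q * (1 - q) * μ ^ 2 / ς ^ 2 = 0 := by
    have key : α₂ * (α₂ * B ^ 2 + 2 * α₁ * B - q * (1 - q) * μ ^ 2 / ς ^ 2) = 0 := by
      linear_combination (α₂ * B + α₄ + α₁) * hB' + hα₄sq
    have := mul_eq_zero.mp key
    rcases this with h | h
    · exact absurd h hα₂pos.ne'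
    · exact h
  have h2 : α₂ * B * C + α₁ * C - α₃ * B = 0 := by
    linear_combination C * hB' + hC'
  have hs : α₂ = σ₁ ^ 2 + σ₂ ^ 2 + 2 * (q * σ₂ ^ 2 / (2 * (1 - q))) := by
    rw [hα₂]; field_simp; ring
  have hφfun : φ = fun x => Real.exp (-(1 / 2) * B * x ^ 2 - C * x) := funext hφ
  subst hφfun
  have hd1 : ∀ x : ℝ, HasDerivAt (fun x => Real.exp (-(1 / 2) * B * x ^ 2 - C * x))
      ((-(B * x) - C) * Real.exp (-(1 / 2) * B * x ^ 2 - C * x)) x := by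
    intro x
    have hg : HasDerivAt (fun x : ℝ => -(1 / 2) * B * x ^ 2 - C * x) (-(B * x) - C) x := by
      have ha := (hasDerivAt_pow 2 x).const_mul (-(1 / 2) * B)
      have hb := (hasDerivAt_id x).const_mul C
      refine (ha.sub hb).congr_deriv ?_
      ring
    have := hg.exp
    convert this using 1
    ring
  have hderiv : deriv (fun x => Real.exp (-(1 / 2) * B * x ^ 2 - C * x))
      = fun x => (-(B * x) - C) * Real.exp (-(1 / 2) * B * x ^ 2 - C * x) :=
    funext fun x => (hd1 x).deriv
  intro x
  set E := Real.exp (-(1 / 2) * B * x ^ 2 - C * x) with hE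
  have hEpos : 0 < E := Real.exp_pos _
  have hd2 : deriv (deriv (fun x => Real.exp (-(1 / 2) * B * x ^ 2 - C * x))) x
      = (-B) * E + (-(B * x) - C) * ((-(B * x) - C) * E) := by
    rw [hderiv]
    have hlin : HasDerivAt (fun x : ℝ => -(B * x) - C) (-B) x := by
      have := ((hasDerivAt_id x).const_mul B).neg.sub_const C
      refine this.congr_deriv ?_
      ring
    exact ((hlin.mul (hd1 x)).deriv)
  rw [hd2, hderiv]
  simp only [← hE]
  have hdiv : (q * σ₂ ^ 2 / (2 * (1 - q))) * ((-(B * x) - C) * E) ^ 2 / E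
      = (q * σ₂ ^ 2 / (2 * (1 - q))) * (B * x + C) ^ 2 * E := by
    field_simp
    ring
  rw [hdiv]
  linear_combination (E * x ^ 2 / 2) * h1 + (E * x) * h2
    - (E / 2) * (B * x + C) ^ 2 * hs + E * hlam
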